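/- A Banach space with the relatively compact Dunford-Pettis property has the L-Dunford-Pettis property if and only if it is reflexive. -/

import Mathlib

open Filter Topology Metric

noncomputable section

instance : Fact ((1:ENNReal) ≤ ⊤) := ⟨le_top⟩

/-- A sequence is weakly null if every continuous linear functional sends it to a null
sequence. -/
def WeaklyNull {X : Type*} [NormedAddCommGroup X] [NormedSpace ℝ X] (x : ℕ → X) : Prop :=
  ∀ f : X →L[ℝ] ℝ, Tendsto (fun n => f (x n)) atTop (𝓝 0)

/-- A sequence of functionals is weak*-null if it tends to zero pointwise. -/
def WeakStarNull {X : Type*} [NormedAddCommGroup X] [NormedSpace ℝ X]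
    (f : ℕ → X →L[ℝ] ℝ) : Prop :=
  ∀ x : X, Tendsto (fun n => f n x) atTop (𝓝 0)

/-- A norm bounded set is a Dunford-Pettis set if every weakly null sequence of functionals
converges to zero uniformly on it. -/
def IsDPSet {X : Type*} [NormedAddCommGroup X] [NormedSpace ℝ X] (A : Set X) : Prop :=
  Bornology.IsBounded A ∧
  ∀ f : ℕ → X →L[ℝ] ℝ, WeaklyNull f →
    Tendsto (fun n => ⨆ x : A, |f n (x : X)|) atTop (𝓝 0)

/-- A norm bounded subset of the dual is an L-set if every weakly null sequence in `X`
converges to zero uniformly on it. -/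
def IsLSet {X : Type*} [NormedAddCommGroup X] [NormedSpace ℝ X]
    (A : Set (X →L[ℝ] ℝ)) : Prop :=
  Bornology.IsBounded A ∧
  ∀ x : ℕ → X, WeaklyNull x →
    Tendsto (fun n => ⨆ f : A, |(f : X →L[ℝ] ℝ) (x n)|) atTop (𝓝 0)

/-- A norm bounded subset of the dual is an L-Dunford-Pettis set if every weakly null
sequence in `X` which is a Dunford-Pettis set converges to zero uniformly on it. -/
def IsLDPSet {X : Type*} [NormedAddCommGroup X] [NormedSpace ℝ X]
    (A : Set (X →L[ℝ] ℝ)) : Prop :=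
  Bornology.IsBounded A ∧
  ∀ x : ℕ → X, WeaklyNull x → IsDPSet (Set.range x) →
    Tendsto (fun n => ⨆ f : A, |(f : X →L[ℝ] ℝ) (x n)|) atTop (𝓝 0)

/-- A set is relatively weakly compact if its closure in the weak topology is compact. -/
def RelWeaklyCompact {X : Type*} [NormedAddCommGroup X] [NormedSpace ℝ X]
    (A : Set X) : Prop :=
  IsCompact (closure ((toWeakSpace ℝ X) '' A))

/-- The relatively compact Dunford-Pettis property: every Dunford-Pettis set is
relatively norm compact. -/
def HasDPrcP (X : Type*) [NormedAddCommGroup X] [NormedSpace ℝ X] : Prop :=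
  ∀ A : Set X, IsDPSet A → IsCompact (closure A)

/-- An operator is Dunford-Pettis completely continuous if it maps weakly null sequences
that are Dunford-Pettis sets to norm null sequences. -/
def IsDPcc {X Y : Type*} [NormedAddCommGroup X] [NormedSpace ℝ X]
    [NormedAddCommGroup Y] [NormedSpace ℝ Y] (T : X →L[ℝ] Y) : Prop :=
  ∀ x : ℕ → X, WeaklyNull x → IsDPSet (Set.range x) →
    Tendsto (fun n => ‖T (x n)‖) atTop (𝓝 0)

/-- An operator is weakly compact if the image of the closed unit ball is relatively
weakly compact. -/
def IsWeaklyCompactOp {X Y : Type*} [NormedAddCommGroup X] [NormedSpace ℝ X]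
    [NormedAddCommGroup Y] [NormedSpace ℝ Y] (T : X →L[ℝ] Y) : Prop :=
  RelWeaklyCompact (T '' closedBall 0 1)

/-- The L-Dunford-Pettis property: every L-Dunford-Pettis set in the dual is relatively
weakly compact. -/
def HasLDPProperty (X : Type*) [NormedAddCommGroup X] [NormedSpace ℝ X] : Prop :=
  ∀ A : Set (X →L[ℝ] ℝ), IsLDPSet A → RelWeaklyCompact A

/-- The Dunford-Pettis property: every relatively weakly compact set is a
Dunford-Pettis set. -/
def HasDPProperty (X : Type*) [NormedAddCommGroup X] [NormedSpace ℝ X] : Prop :=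
  ∀ A : Set X, RelWeaklyCompact A → IsDPSet A

/-- Grothendieck space: every weak*-null sequence in the dual is weakly null. -/
def IsGrothendieck (X : Type*) [NormedAddCommGroup X] [NormedSpace ℝ X] : Prop :=
  ∀ f : ℕ → X →L[ℝ] ℝ, WeakStarNull f → WeaklyNull f

/-- The space `ℓ∞` of bounded real sequences. -/
abbrev ellInfty : Type := lp (fun _ : ℕ => ℝ) ⊤


section AuxStmt14
open Function NormedSpace


lemma weakBilin_dual {E F : Type*} [AddCommGroup E] [Module ℝ E] [AddCommGroup F] [Module ℝ F]
    (B : E →ₗ[ℝ] F →ₗ[ℝ] ℝ) (φ : WeakBilin B →L[ℝ] ℝ) : ∃ y : F, ∀ x, φ x = B x y := by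
  have h1 : φ ⁻¹' (Metric.ball (0:ℝ) 1) ∈ 𝓝 (0 : WeakBilin B) :=
    φ.continuous.continuousAt.preimage_mem_nhds (by simpa using Metric.ball_mem_nhds (0:ℝ) one_pos)
  obtain ⟨U, hU, hUsub⟩ := (B.hasBasis_weakBilin).mem_iff.mp h1
  obtain ⟨s, r, hr, rfl⟩ := (SeminormFamily.basisSets_iff _).mp hU
  -- kernel inclusion
  have hker : (⨅ i : {i // i ∈ s}, LinearMap.ker (B.flip i.1)) ≤ LinearMap.ker (φ : WeakBilin B →ₗ[ℝ] ℝ) := by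
    intro x hx
    simp only [Submodule.mem_iInf, LinearMap.mem_ker] at hx ⊢
    have key : ∀ t : ℝ, |t| * |φ x| < 1 := by
      intro t
      have hmem : (t • x : WeakBilin B) ∈ Seminorm.ball (s.sup (B.toSeminormFamily)) 0 r := by
        rw [Seminorm.mem_ball_zero]
        refine Seminorm.finset_sup_apply_lt hr fun i hi => ?_
        have h0 : (B x) i = 0 := hx ⟨i, hi⟩
        simp [LinearMap.toSeminormFamily_apply, map_smul, h0, hr]
      have this : dist (φ (t • x : WeakBilin B)) 0 < 1 := hUsub hmem
      rw [dist_zero_right, Real.norm_eq_abs] at this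
      have e : |φ (t • x : WeakBilin B)| = |t| * |φ x| := by
        rw [← abs_mul]; exact congrArg abs (map_smul φ t x)
      exact lt_of_eq_of_lt e.symm this
    by_contra h
    have h0 : 0 < |φ x| := abs_pos.mpr h
    have := key (2 / |φ x|)
    rw [abs_div] at this
    simp only [abs_abs, abs_two] at this
    rw [div_mul_cancel₀ _ (ne_of_gt h0)] at this
    norm_num at this
  have hspan := mem_span_of_iInf_ker_le_ker (L := fun i : {i // i ∈ s} => B.flip i.1)
    (K := (φ : WeakBilin B →ₗ[ℝ] ℝ)) hker
  obtain ⟨c, hc⟩ := (Submodule.mem_span_range_iff_exists_fun ℝ).mp hspan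
  refine ⟨∑ i : {i // i ∈ s}, c i • i.1, fun x => ?_⟩
  have this : ∀ y : E, (∑ i : {i // i ∈ s}, c i • B.flip i.1) y = (φ : WeakBilin B →ₗ[ℝ] ℝ) y :=
    fun y => LinearMap.congr_fun hc y
  simp only [LinearMap.coe_sum, Finset.sum_apply, LinearMap.smul_apply, smul_eq_mul] at this
  have hφx : φ x = ∑ i : { i // i ∈ s }, c i * (B x) i.1 := by
    exact (this x).symm
  rw [hφx, map_sum]
  simp [smul_eq_mul]


lemma aux_norm_null {X : Type*} [NormedAddCommGroup X] [NormedSpace ℝ X]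
    {x : ℕ → X} (hw : WeaklyNull x) (hc : IsCompact (closure (Set.range x))) :
    Tendsto x atTop (𝓝 0) := by
  refine tendsto_of_subseq_tendsto fun ns hns => ?_
  obtain ⟨a, -, φ, hφ, hlim⟩ := hc.tendsto_subseq (x := fun n => x (ns n))
      (fun n => subset_closure (Set.mem_range_self _))
  have ha : a = 0 := by
    refine NormedSpace.eq_zero_of_forall_dual_eq_zero ℝ fun f => ?_
    have h1 : Tendsto (fun n => f (x (ns (φ n)))) atTop (𝓝 (f a)) :=
      (f.continuous.tendsto a).comp hlim
    have h2 : Tendsto (fun n => f (x (ns (φ n)))) atTop (𝓝 0) :=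
      (hw f).comp (hns.comp hφ.tendsto_atTop)
    exact tendsto_nhds_unique h1 h2
  exact ⟨φ, ha ▸ hlim⟩

lemma isLDPSet_of_bounded {X : Type*} [NormedAddCommGroup X] [NormedSpace ℝ X]
    (hX : HasDPrcP X) {A : Set (X →L[ℝ] ℝ)} (hA : Bornology.IsBounded A) :
    IsLDPSet A := by
  refine ⟨hA, fun x hx hdp => ?_⟩
  have hn : Tendsto (fun n => ‖x n‖) atTop (𝓝 0) := by
    have := aux_norm_null hx (hX _ hdp)
    rwa [tendsto_zero_iff_norm_tendsto_zero] at this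
  obtain ⟨C, hC⟩ := hA.exists_norm_le
  have hC0 : 0 ≤ max C 0 := le_max_right _ _
  refine squeeze_zero (g := fun n => (max C 0) * ‖x n‖)
    (fun n => Real.iSup_nonneg fun f => abs_nonneg _)
    (fun n => Real.iSup_le (fun f => ?_) (by positivity)) ?_
  · calc |(f : X →L[ℝ] ℝ) (x n)| = ‖(f : X →L[ℝ] ℝ) (x n)‖ := rfl
      _ ≤ ‖(f : X →L[ℝ] ℝ)‖ * ‖x n‖ := (f : X →L[ℝ] ℝ).le_opNorm _
      _ ≤ max C 0 * ‖x n‖ := by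
          apply mul_le_mul_of_nonneg_right _ (norm_nonneg _)
          exact le_trans (hC f f.2) (le_max_left _ _)
  · simpa using hn.const_mul (max C 0)

lemma t2_weakSpace (D : Type*) [NormedAddCommGroup D] [NormedSpace ℝ D] :
    T2Space (WeakSpace ℝ D) := by
  have hinj : Function.Injective ((topDualPairing ℝ D).flip) := by
    intro a b hab
    have : ∀ f : D →L[ℝ] ℝ, f (a - b) = 0 := by
      intro f
      have := congrFun (congrArg (fun g : (D →L[ℝ] ℝ) →ₗ[ℝ] ℝ => (g : (D →L[ℝ] ℝ) → ℝ)) hab) f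
      simp only [topDualPairing_apply, LinearMap.flip_apply] at this
      simp [map_sub, this]
    exact sub_eq_zero.mp (NormedSpace.eq_zero_of_forall_dual_eq_zero ℝ this)
  exact (WeakBilin.isEmbedding hinj).t2Space

lemma relWC_of_bounded {X : Type*} [NormedAddCommGroup X] [NormedSpace ℝ X]
    (hs : Surjective (inclusionInDoubleDual ℝ X)) {A : Set (X →L[ℝ] ℝ)}
    (hA : Bornology.IsBounded A) :
    IsCompact (closure ((toWeakSpace ℝ (X →L[ℝ] ℝ)) '' A)) := by
  haveI := t2_weakSpace (X →L[ℝ] ℝ)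
  obtain ⟨r, hr⟩ := hA.subset_closedBall (0 : X →L[ℝ] ℝ)
  have hcpt := WeakDual.isCompact_closedBall (𝕜 := ℝ) (E := X) 0 r
  -- identity map WeakDual → WeakSpace, continuous under reflexivity
  let θ : WeakDual ℝ X → WeakSpace ℝ (X →L[ℝ] ℝ) := fun f => toWeakSpace ℝ _ f.toStrongDual
  have hθ : Continuous θ := by
    apply WeakBilin.continuous_of_continuous_eval
    intro y
    obtain ⟨x, rfl⟩ := hs y
    exact WeakDual.eval_continuous (𝕜 := ℝ) (E := X) x
  have hK : IsCompact (θ '' (WeakDual.toStrongDual ⁻¹' closedBall 0 r)) := hcpt.image hθ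
  refine hK.of_isClosed_subset isClosed_closure (closure_minimal ?_ hK.isClosed)
  rintro - ⟨f, hf, rfl⟩
  exact ⟨f, hr hf, rfl⟩

lemma surj_of_ball_weaklyCompact {D : Type*} [NormedAddCommGroup D] [NormedSpace ℝ D]
    (hc : IsCompact (closure ((toWeakSpace ℝ D) '' closedBall 0 1))) :
    Surjective (inclusionInDoubleDual ℝ D) := by
  haveI : ContinuousSMul ℝ (WeakSpace ℝ D) :=
    WeakBilin.instContinuousSMul ((topDualPairing ℝ D).flip)
  haveI : ContinuousSMul ℝ (WeakDual ℝ (StrongDual ℝ D)) :=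
    WeakBilin.instContinuousSMul (topDualPairing ℝ (StrongDual ℝ D))
  haveI : LocallyConvexSpace ℝ (WeakDual ℝ (StrongDual ℝ D)) :=
    by exact @WeakBilin.locallyConvexSpace ℝ (StrongDual ℝ (StrongDual ℝ D)) (StrongDual ℝ D) _ _ _ _ _ _ _ _ (topDualPairing ℝ (StrongDual ℝ D))
  set K := closure ((toWeakSpace ℝ D) '' closedBall 0 1) with hKdef
  let ΨL : WeakSpace ℝ D →ₗ[ℝ] WeakDual ℝ (StrongDual ℝ D) :=
    (inclusionInDoubleDual ℝ D).toLinearMap.comp ((toWeakSpace ℝ D).symm.toLinearMap)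
  have hΨ : Continuous ΨL := by
    apply WeakDual.continuous_of_continuous_eval
    intro y
    exact WeakBilin.eval_continuous ((topDualPairing ℝ D).flip) y
  set C : Set (WeakDual ℝ (StrongDual ℝ D)) := ΨL '' K with hCdef
  have hCcpt : IsCompact C := hc.image hΨ
  have hCclosed : IsClosed C := hCcpt.isClosed
  have hCconv : Convex ℝ C := by
    refine Convex.linear_image ?_ ΨL
    exact ((convex_closedBall (0:D) 1).linear_image (toWeakSpace ℝ D).toLinearMap).closure
  -- every functional of norm ≤ 1 on the dual lies in C
  have key : ∀ Φ : StrongDual ℝ (StrongDual ℝ D), ‖Φ‖ ≤ 1 → (Φ : WeakDual ℝ (StrongDual ℝ D)) ∈ C := by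
    intro Φ hΦ
    by_contra hmem
    obtain ⟨φ, u, hlt, hgt⟩ := geometric_hahn_banach_closed_point hCconv hCclosed hmem
    obtain ⟨G, hG⟩ := @weakBilin_dual (StrongDual ℝ (StrongDual ℝ D)) (StrongDual ℝ D) (inferInstance : AddCommGroup (StrongDual ℝ (StrongDual ℝ D))) (inferInstance : Module ℝ (StrongDual ℝ (StrongDual ℝ D))) (inferInstance : AddCommGroup (StrongDual ℝ D)) (inferInstance : Module ℝ (StrongDual ℝ D)) (topDualPairing ℝ (StrongDual ℝ D)) φ
    -- on elements of the ball: (J f) G = G f < u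
    have hball : ∀ f : D, ‖f‖ ≤ 1 → G f < u := by
      intro f hf
      have hfK : (toWeakSpace ℝ D f) ∈ K := subset_closure ⟨f, by simpa using hf, rfl⟩
      have h5 : φ (ΨL ((toWeakSpace ℝ D) f)) = G f := hG _
      have := hlt _ ⟨_, hfK, rfl⟩
      rwa [h5] at this
    have hu0 : 0 < u := by simpa using hball 0 (by simp)
    have hGnorm : ‖G‖ ≤ u := by
      refine G.opNorm_le_bound hu0.le fun f => ?_
      rcases eq_or_ne f 0 with rfl | hf
      · simp [hu0.le]
      · have hfpos : 0 < ‖f‖ := norm_pos_iff.mpr hf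
        have hsm : ‖(‖f‖⁻¹ • f : D)‖ ≤ 1 := by
          simp [norm_smul, inv_mul_cancel₀ hfpos.ne']
        have h2 := (hball _ hsm).le
        have h3 := (hball (-(‖f‖⁻¹ • f)) (by simpa using hsm)).le
        rw [map_smul, smul_eq_mul] at h2
        rw [map_neg, map_smul, smul_eq_mul] at h3
        have hinv : ‖f‖⁻¹ * ‖f‖ = 1 := inv_mul_cancel₀ hfpos.ne'
        have habs : |G f| ≤ u * ‖f‖ := by
          rw [abs_le]
          constructor <;>
            nlinarith [mul_le_mul_of_nonneg_right h2 hfpos.le,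
              mul_le_mul_of_nonneg_right h3 hfpos.le, hinv]
        simpa [Real.norm_eq_abs] using habs
    have hΦG : φ Φ ≤ u := by
      have h6 : φ Φ = (Φ : WeakDual ℝ (StrongDual ℝ D)) G := hG Φ
      rw [h6]
      calc (Φ : WeakDual ℝ (StrongDual ℝ D)) G ≤ ‖Φ G‖ := le_abs_self _
        _ ≤ ‖Φ‖ * ‖G‖ := Φ.le_opNorm G
        _ ≤ 1 * u := by
            apply mul_le_mul hΦ hGnorm (norm_nonneg _) zero_le_one
        _ = u := one_mul u
    exact absurd hΦG (not_le.mpr hgt)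
  -- conclude surjectivity
  intro Φ
  rcases eq_or_ne Φ 0 with rfl | hΦ
  · exact ⟨0, map_zero _⟩
  · have hn : ‖Φ‖ ≠ 0 := fun h => hΦ ((ContinuousLinearMap.opNorm_zero_iff Φ).mp h)
    have h1 : ‖(‖Φ‖⁻¹ • Φ : StrongDual ℝ (StrongDual ℝ D))‖ ≤ 1 := by
      refine (ContinuousLinearMap.opNorm_smul_le _ _).trans (le_of_eq ?_)
      rw [Real.norm_of_nonneg (inv_nonneg.mpr (norm_nonneg Φ)), inv_mul_cancel₀ hn]
    obtain ⟨g, hgK, hg⟩ := key _ h1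
    refine ⟨‖Φ‖ • (toWeakSpace ℝ D).symm g, ?_⟩
    have : ΨL g = ‖Φ‖⁻¹ • Φ := hg
    have h2 : inclusionInDoubleDual ℝ D ((toWeakSpace ℝ D).symm g) = ‖Φ‖⁻¹ • Φ := this
    rw [map_smul, h2, smul_smul, mul_inv_cancel₀ hn, one_smul]

lemma surj_of_dual_surj {X : Type*} [NormedAddCommGroup X] [NormedSpace ℝ X] [CompleteSpace X]
    (hs : Surjective (inclusionInDoubleDual ℝ (StrongDual ℝ X))) :
    Surjective (inclusionInDoubleDual ℝ X) := by
  intro G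
  by_contra hG
  have hrange : IsClosed (Set.range (inclusionInDoubleDual ℝ X)) := by
    have hiso : Isometry (inclusionInDoubleDual ℝ X) :=
      (inclusionInDoubleDualLi ℝ (E := X)).isometry
    exact hiso.isClosedEmbedding.isClosed_range
  have hconv : Convex ℝ (Set.range (inclusionInDoubleDual ℝ X)) := by
    rw [← Set.image_univ]
    exact convex_univ.linear_image (inclusionInDoubleDual ℝ X).toLinearMap
  have hGmem : G ∉ Set.range (inclusionInDoubleDual ℝ X) := by
    simpa [Set.range] using hG
  obtain ⟨f, u, hlt, hgt⟩ := geometric_hahn_banach_closed_point hconv hrange hGmem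
  -- f vanishes on the range
  have hvanish : ∀ x : X, f (inclusionInDoubleDual ℝ X x) = 0 := by
    intro x
    by_contra hfx
    have hx : ∀ t : ℝ, t * f (inclusionInDoubleDual ℝ X x) < u := by
      intro t
      have := hlt _ ⟨t • x, map_smul _ t x⟩
      rwa [map_smul, smul_eq_mul] at this
    rcases lt_or_gt_of_ne hfx with hneg | hpos
    · have := hx ((u + 1) / f (inclusionInDoubleDual ℝ X x))
      rw [div_mul_cancel₀ _ hfx] at this
      linarith
    · have := hx ((u + 1) / f (inclusionInDoubleDual ℝ X x))
      rw [div_mul_cancel₀ _ hfx] at this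
      linarith
  -- f comes from some g in the dual
  obtain ⟨g, hg⟩ := hs f
  have hgzero : g = 0 := by
    ext x
    have := hvanish x
    rw [← hg] at this
    simpa [NormedSpace.dual_def] using this
  have : f = 0 := by rw [← hg, hgzero, map_zero]
  have h0 : f G > u := hgt
  have h1 : (0:ℝ) < u := by simpa using hlt _ ⟨0, map_zero _⟩
  rw [this] at h0
  simp at h0
  linarith

end AuxStmt14

theorem stmt14 {X : Type*} [NormedAddCommGroup X] [NormedSpace ℝ X] [CompleteSpace X]
    (hX : HasDPrcP X) :
    HasLDPProperty X ↔ Function.Surjective (NormedSpace.inclusionInDoubleDual ℝ X) := by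
  constructor
  · intro hL
    have h1 : RelWeaklyCompact (closedBall (0 : X →L[ℝ] ℝ) 1) :=
      hL _ (isLDPSet_of_bounded hX Metric.isBounded_closedBall)
    exact surj_of_dual_surj (surj_of_ball_weaklyCompact h1)
  · intro hs A hA
    exact relWC_of_bounded hs hA.1
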